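/- Freedman's inequality: let M, v > 0 and let {x_i}_{i=1}^n be a process adapted to a filtration {G_i} such that x_i is G_i-measurable, E[x_i | G_{i-1}] = 0 almost surely, |x_i| ≤ M almost surely, and ∑_{i=1}^n E[x_i² | G_{i-1}] ≤ v almost surely. Then for any δ > 0, with probability at least 1 − δ, ∑_{i=1}^n x_i ≤ √(2v·log(1/δ)) + (2/3)·M·log(1/δ). -/

import Mathlib

open MeasureTheory Finset
open scoped Real

section helpers
open Real

private lemma exp_tail (x : ℝ) :
    Real.exp x - 1 - x = ∑' n : ℕ, x ^ (n+2) / (Nat.factorial (n+2)) := by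
  have h := Real.summable_pow_div_factorial x
  have h2 := Summable.sum_add_tsum_nat_add (f := fun n => x ^ n / Nat.factorial n) 2 h
  have hexp : Real.exp x = ∑' n : ℕ, x ^ n / Nat.factorial n := by
    rw [Real.exp_eq_exp_ℝ, NormedSpace.exp_eq_tsum_div]
  rw [hexp, ← h2]
  simp [Finset.sum_range_succ, Nat.factorial]
  ring

private lemma tail_summable (x : ℝ) : Summable (fun n : ℕ => x ^ (n+2) / (Nat.factorial (n+2))) :=
  (summable_nat_add_iff 2).2 (Real.summable_pow_div_factorial x)

-- L1: pointwise Bernstein bound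
private lemma bernstein_pointwise {M l y : ℝ} (hM : 0 < M) (hl : 0 ≤ l) (hy : |y| ≤ M) :
    Real.exp (l * y) ≤ 1 + l * y + (Real.exp (l * M) - 1 - l * M) / M ^ 2 * y ^ 2 := by
  have key : Real.exp (l * y) - 1 - l * y ≤
      (Real.exp (l * M) - 1 - l * M) / M ^ 2 * y ^ 2 := by
    rw [exp_tail]
    have hsum : (Real.exp (l * M) - 1 - l * M) / M ^ 2 * y ^ 2
        = ∑' n : ℕ, (l*M) ^ (n+2) / (Nat.factorial (n+2)) / M ^ 2 * y ^ 2 := by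
      rw [exp_tail, ← tsum_div_const, ← tsum_mul_right]
    rw [hsum]
    refine Summable.tsum_le_tsum (fun n => ?_) (tail_summable _)
      (((tail_summable (l*M)).div_const _).mul_right _)
    have h1 : (l*y) ^ (n+2) ≤ l ^ (n+2) * (M ^ n * y ^ 2) := by
      calc (l*y) ^ (n+2) ≤ |(l*y) ^ (n+2)| := le_abs_self _
        _ = l ^ (n+2) * |y| ^ (n+2) := by
            rw [abs_pow, abs_mul, mul_pow, abs_of_nonneg hl]
        _ ≤ l ^ (n+2) * (M ^ n * y ^ 2) := by
            refine mul_le_mul_of_nonneg_left ?_ (pow_nonneg hl _)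
            have : |y| ^ (n+2) = |y| ^ n * y ^ 2 := by
              rw [pow_add, sq_abs]
            rw [this]
            exact mul_le_mul_of_nonneg_right
              (pow_le_pow_left₀ (abs_nonneg y) hy n) (sq_nonneg y)
    have hM2 : (0:ℝ) < M ^ 2 := by positivity
    rw [div_div, div_mul_eq_mul_div, div_le_div_iff₀ (by positivity) (by positivity), mul_pow (l) (M)]
    calc (l*y) ^ (n+2) * (Nat.factorial (n+2) * M ^ 2)
        ≤ l ^ (n+2) * (M ^ n * y ^ 2) * (Nat.factorial (n+2) * M ^ 2) := by
          exact mul_le_mul_of_nonneg_right h1 (by positivity)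
      _ = l ^ (n+2) * M ^ (n+2) * y ^ 2 * Nat.factorial (n+2) := by ring
  linarith

private lemma fact_ge : ∀ n : ℕ, (2:ℝ) * 3 ^ n ≤ Nat.factorial (n+2) := by
  intro n
  induction n with
  | zero => norm_num [Nat.factorial]
  | succ k ih =>
      have h3 : (3:ℝ) ≤ (k+3 : ℕ) := by push_cast; linarith
      calc (2:ℝ) * 3 ^ (k+1) = 3 * (2 * 3 ^ k) := by ring
        _ ≤ ((k+3:ℕ):ℝ) * Nat.factorial (k+2) := by
            apply mul_le_mul h3 ih (by positivity) (by positivity)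
        _ = Nat.factorial (k+3) := by
            rw [show k+3 = (k+2)+1 from rfl, Nat.factorial_succ]
            push_cast [Nat.factorial_succ]
            ring

-- L2
private lemma exp_quad_bound {t : ℝ} (ht : 0 ≤ t) (ht3 : t < 3) :
    Real.exp t - 1 - t ≤ t ^ 2 / (2 * (1 - t / 3)) := by
  rw [exp_tail]
  have hr : (0:ℝ) ≤ t/3 := by linarith
  have hr1 : t/3 < 1 := by linarith
  have hgeo : ∑' n : ℕ, (t/3) ^ n = (1 - t/3)⁻¹ := tsum_geometric_of_lt_one hr hr1
  have hsum : t ^ 2 / (2 * (1 - t/3)) = ∑' n : ℕ, t ^ 2 / 2 * (t/3) ^ n := by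
    rw [tsum_mul_left, hgeo]
    field_simp
  rw [hsum]
  refine Summable.tsum_le_tsum (fun n => ?_) (tail_summable _)
    ((summable_geometric_of_lt_one hr hr1).mul_left _)
  have h1 : (0:ℝ) < Nat.factorial (n+2) := by positivity
  rw [div_le_iff₀ h1]
  have h2 := fact_ge n
  calc t ^ (n+2) = t ^ 2 * t ^ n := by ring
    _ = t ^ 2 / 2 * (t/3) ^ n * (2 * 3 ^ n) := by
        rw [div_pow]
        field_simp
    _ ≤ t ^ 2 / 2 * (t/3) ^ n * Nat.factorial (n+2) := by
        have hnn : (0:ℝ) ≤ t ^ 2 / 2 * (t/3) ^ n := by positivity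
        exact mul_le_mul_of_nonneg_left h2 hnn

private lemma choose_lambda {M v L t l : ℝ} (hM : 0 < M) (hv : 0 < v) (hL : 0 < L)
    (ht : t = Real.sqrt (2*v*L) + 2/3*M*L) (hl : l = t/(v + M*t/3)) :
    0 < l ∧ l*M < 3 ∧
      v * ((Real.exp (l*M) - 1 - l*M)/M^2) - l*t ≤ -L := by
  set s := Real.sqrt (2*v*L) with hs
  have hs0 : 0 ≤ s := Real.sqrt_nonneg _
  have hs2 : s ^ 2 = 2*v*L := Real.sq_sqrt (by positivity)
  have ht0 : 0 < t := by rw [ht]; positivity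
  have hD : 0 < v + M*t/3 := by positivity
  have hl0 : 0 < l := by rw [hl]; positivity
  have hlM : l * M < 3 := by
    rw [hl, div_mul_eq_mul_div, div_lt_iff₀ hD]
    nlinarith
  refine ⟨hl0, hlM, ?_⟩
  have h1 : 1 - l*M/3 = v / (v + M*t/3) := by
    rw [hl]; field_simp; ring
  have hφ : Real.exp (l*M) - 1 - l*M ≤ (l*M) ^ 2 / (2 * (1 - l*M/3)) :=
    exp_quad_bound (by positivity) hlM
  have h2 : (l*M) ^ 2 / (2 * (1 - l*M/3)) = t^2 * M^2 / (2*v*(v + M*t/3)) := by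
    rw [h1, hl]
    field_simp
  have he : Real.exp (l*M) - 1 - l*M ≤ t^2*M^2/(2*v*(v + M*t/3)) :=
    hφ.trans (le_of_eq h2)
  have h3 : v * ((Real.exp (l*M) - 1 - l*M)/M^2) ≤ t^2/(2*(v + M*t/3)) := by
    have : v * ((Real.exp (l*M) - 1 - l*M)/M^2)
        ≤ v * ((t^2*M^2/(2*v*(v + M*t/3)))/M^2) := by gcongr
    refine this.trans (le_of_eq ?_)
    field_simp
  have h4 : l * t = t^2/(v + M*t/3) := by rw [hl]; ring
  have ht2 : t^2 = s^2 + 4/3*M*L*s + 4/9*M^2*L^2 := by rw [ht]; ring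
  have h5 : t^2 ≥ 2*L*(v + M*t/3) := by
    rw [ht2, hs2, ht]
    nlinarith [mul_nonneg (mul_nonneg hM.le hL.le) hs0]
  have h6 : t^2/(2*(v + M*t/3)) ≥ L := by
    rw [ge_iff_le, le_div_iff₀ (by positivity)]; nlinarith
  have h7 : l*t - v * ((Real.exp (l*M) - 1 - l*M)/M^2) ≥ t^2/(v + M*t/3) - t^2/(2*(v + M*t/3)) := by
    rw [h4]; linarith
  have h8 : t^2/(v + M*t/3) - t^2/(2*(v + M*t/3)) = t^2/(2*(v + M*t/3)) := by
    field_simp; ring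
  linarith

end helpers

/-- Freedman's inequality for martingale difference sequences. -/
theorem statement17 {Ω : Type*} {m : MeasurableSpace Ω} (P : Measure Ω) [IsProbabilityMeasure P]
    (G : Filtration ℕ m) (n : ℕ) (x : ℕ → Ω → ℝ) (M v δ : ℝ)
    (hM : 0 < M) (hv : 0 < v) (hδ : 0 < δ)
    (hmeas : ∀ i, 1 ≤ i → i ≤ n → Measurable[G i] (x i))
    (hmean : ∀ i, 1 ≤ i → i ≤ n → P[x i|G (i - 1)] =ᵐ[P] 0)
    (hbdd : ∀ i, 1 ≤ i → i ≤ n → ∀ᵐ ω ∂P, |x i ω| ≤ M)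
    (hvar : ∀ᵐ ω ∂P,
      ∑ i ∈ Finset.Icc 1 n, (P[(fun ω' => x i ω' ^ 2)|G (i - 1)]) ω ≤ v) :
    ENNReal.ofReal (1 - δ) ≤
      P {ω | ∑ i ∈ Finset.Icc 1 n, x i ω ≤
        Real.sqrt (2 * v * Real.log (1 / δ)) + 2 / 3 * M * Real.log (1 / δ)} := by
  -- trivial case δ ≥ 1
  rcases le_or_gt 1 δ with hδ1 | hδ1
  · rw [ENNReal.ofReal_eq_zero.2 (by linarith)]
    exact zero_le
  -- parameters
  set L : ℝ := Real.log (1 / δ) with hLdef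
  have hL : 0 < L := Real.log_pos ((one_lt_one_div hδ hδ1))
  set t : ℝ := Real.sqrt (2 * v * L) + 2 / 3 * M * L with htdef
  set l : ℝ := t / (v + M * t / 3) with hldef
  obtain ⟨hl0, hlM3, hexp_le⟩ := choose_lambda hM hv hL htdef hldef
  set φ : ℝ := (Real.exp (l * M) - 1 - l * M) / M ^ 2 with hφdef
  have hφ0 : 0 ≤ φ := by
    have := Real.add_one_le_exp (l * M)
    have hM2 : (0:ℝ) < M ^ 2 := by positivity
    apply div_nonneg (by linarith) hM2.le
  -- the processes
  set σ : ℕ → Ω → ℝ := fun i => P[(fun ω' => x i ω' ^ 2)|G (i - 1)] with hσdef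
  set S : ℕ → Ω → ℝ := fun k ω => ∑ i ∈ Finset.Icc 1 k, x i ω with hSdef
  set V : ℕ → Ω → ℝ := fun k ω => ∑ i ∈ Finset.Icc 1 k, σ i ω with hVdef
  set W : ℕ → Ω → ℝ := fun k ω => Real.exp (l * S k ω - φ * V k ω) with hWdef
  -- basic measurability/integrability facts
  have hx_meas : ∀ i, 1 ≤ i → i ≤ n → Measurable (x i) :=
    fun i h1 h2 => (hmeas i h1 h2).mono (G.le i) le_rfl
  have hx_int : ∀ i, 1 ≤ i → i ≤ n → Integrable (x i) P := by
    intro i h1 h2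
    refine Integrable.mono' (integrable_const M) (hx_meas i h1 h2).aestronglyMeasurable ?_
    filter_upwards [hbdd i h1 h2] with ω hω using hω
  have hx2_int : ∀ i, 1 ≤ i → i ≤ n → Integrable (fun ω => x i ω ^ 2) P := by
    intro i h1 h2
    refine Integrable.mono' (integrable_const (M ^ 2))
      ((hx_meas i h1 h2).pow_const 2).aestronglyMeasurable ?_
    filter_upwards [hbdd i h1 h2] with ω hω
    rw [Real.norm_eq_abs, abs_pow]
    exact pow_le_pow_left₀ (abs_nonneg _) hω 2
  have hσ_sm : ∀ i, StronglyMeasurable[G (i - 1)] (σ i) := fun i => stronglyMeasurable_condExp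
  have hσ_meas : ∀ i, Measurable (σ i) :=
    fun i => ((hσ_sm i).measurable).mono (G.le (i-1)) le_rfl
  have hσ_nonneg : ∀ i, 0 ≤ᵐ[P] σ i :=
    fun i => condExp_nonneg (Filter.Eventually.of_forall fun ω => sq_nonneg _)
  have hS_meas : ∀ k, k ≤ n → Measurable (S k) := by
    intro k hk
    apply Finset.measurable_sum
    intro i hi
    simp only [Finset.mem_Icc] at hi
    exact hx_meas i hi.1 (hi.2.trans hk)
  have hV_meas : ∀ k, Measurable (V k) :=
    fun k => Finset.measurable_sum _ fun i _ => hσ_meas i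
  have hW_meas : ∀ k, k ≤ n → Measurable (W k) := by
    intro k hk
    exact (((hS_meas k hk).const_mul l).sub ((hV_meas k).const_mul φ)).exp
  -- a.e. bounds
  have hbdd_all : ∀ᵐ ω ∂P, ∀ i ∈ Finset.Icc 1 n, |x i ω| ≤ M := by
    rw [Filter.eventually_all_finset]
    intro i hi
    simp only [Finset.mem_Icc] at hi
    exact hbdd i hi.1 hi.2
  have hσ_nonneg_all : ∀ᵐ ω ∂P, ∀ i ∈ Finset.Icc 1 n, 0 ≤ σ i ω := by
    rw [Filter.eventually_all_finset]
    intro i _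
    exact hσ_nonneg i
  have hW_int : ∀ k, k ≤ n → Integrable (W k) P := by
    intro k hk
    refine Integrable.mono' (integrable_const (Real.exp (l * (n * M))))
      (hW_meas k hk).aestronglyMeasurable ?_
    filter_upwards [hbdd_all, hσ_nonneg_all] with ω hb hσ0
    rw [Real.norm_eq_abs, abs_of_pos (Real.exp_pos _), Real.exp_le_exp]
    have hSb : S k ω ≤ n * M := by
      calc S k ω ≤ ∑ i ∈ Finset.Icc 1 k, M := by
            apply Finset.sum_le_sum
            intro i hi
            have hik : i ∈ Finset.Icc 1 n := by
              simp only [Finset.mem_Icc] at hi ⊢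
              exact ⟨hi.1, hi.2.trans hk⟩
            exact (abs_le.1 (hb i hik)).2
        _ = (Finset.Icc 1 k).card * M := by rw [Finset.sum_const, nsmul_eq_mul]
        _ ≤ n * M := by
            have hcard : (Finset.Icc 1 k).card = k := by simp [Nat.card_Icc]
            rw [hcard]
            have hkn : (k:ℝ) ≤ n := by exact_mod_cast hk
            exact mul_le_mul_of_nonneg_right hkn hM.le
    have hVb : 0 ≤ V k ω := by
      apply Finset.sum_nonneg
      intro i hi
      have hik : i ∈ Finset.Icc 1 n := by
        simp only [Finset.mem_Icc] at hi ⊢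
        exact ⟨hi.1, hi.2.trans hk⟩
      exact hσ0 i hik
    nlinarith [hl0.le, hφ0]
  -- key induction: ∫ W k ≤ 1
  have hWint_le : ∀ k, k ≤ n → ∫ ω, W k ω ∂P ≤ 1 := by
    intro k
    induction k with
    | zero =>
        intro _
        have : W 0 = fun _ => 1 := by
          funext ω
          simp [hWdef, hSdef, hVdef]
        rw [this]
        simp
    | succ j ih =>
        intro hjn
        have hjn' : j ≤ n := Nat.le_of_succ_le hjn
        refine le_trans ?_ (ih hjn')
        have h1j : 1 ≤ j + 1 := Nat.le_add_left 1 j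
        set F : Ω → ℝ := fun ω => Real.exp (l * S j ω - φ * V (j+1) ω) with hFdef
        set g : Ω → ℝ := fun ω => Real.exp (l * x (j+1) ω) with hgdef
        have hSsucc : ∀ ω, S (j+1) ω = S j ω + x (j+1) ω := by
          intro ω
          simp only [hSdef]
          rw [Finset.sum_Icc_succ_top h1j]
        have hVsucc : ∀ ω, V (j+1) ω = V j ω + σ (j+1) ω := by
          intro ω
          simp only [hVdef]
          rw [Finset.sum_Icc_succ_top h1j]
        have hFg : W (j+1) = F * g := by
          funext ω
          simp only [hWdef, hFdef, hgdef, Pi.mul_apply, ← Real.exp_add]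
          rw [hSsucc ω]
          ring_nf
        -- measurability of F w.r.t. G j
        have hSj_meas : Measurable[G j] (S j) := by
          apply Finset.measurable_sum
          intro i hi
          simp only [Finset.mem_Icc] at hi
          exact (hmeas i hi.1 ((hi.2.trans (Nat.le_succ j)).trans hjn)).mono
            (G.mono hi.2) le_rfl
        have hVj1_meas : Measurable[G j] (V (j+1)) := by
          apply Finset.measurable_sum
          intro i hi
          simp only [Finset.mem_Icc] at hi
          exact (hσ_sm i).measurable.mono (G.mono (Nat.sub_le_of_le_add hi.2)) le_rfl
        have hF_sm : StronglyMeasurable[G j] F :=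
          (((hSj_meas.const_mul l).sub (hVj1_meas.const_mul φ)).exp).stronglyMeasurable
        have hg_int : Integrable g P := by
          refine Integrable.mono' (integrable_const (Real.exp (l * M)))
            ((((hx_meas (j+1) h1j hjn).const_mul l).exp).aestronglyMeasurable) ?_
          filter_upwards [hbdd (j+1) h1j hjn] with ω hω
          rw [Real.norm_eq_abs, abs_of_pos (Real.exp_pos _), Real.exp_le_exp]
          exact mul_le_mul_of_nonneg_left ((abs_le.1 hω).2) hl0.le
        have hW1_int : Integrable (F * g) P := hFg ▸ hW_int (j+1) hjn
        have hpull : P[F * g|G j] =ᵐ[P] F * P[g|G j] :=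
          condExp_mul_of_stronglyMeasurable_left hF_sm hW1_int hg_int
        -- conditional Bernstein bound on g
        have hgle : g ≤ᵐ[P] fun ω => 1 + l * x (j+1) ω + φ * x (j+1) ω ^ 2 := by
          filter_upwards [hbdd (j+1) h1j hjn] with ω hω
          exact bernstein_pointwise hM hl0.le hω
        have hh_int : Integrable (fun ω => 1 + l * x (j+1) ω + φ * x (j+1) ω ^ 2) P := by
          have := ((hx_int (j+1) h1j hjn).const_mul l).add
            ((hx2_int (j+1) h1j hjn).const_mul φ)
          simpa [add_assoc, Pi.add_def] using (integrable_const (1:ℝ)).add this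
        have hcondh : P[fun ω => 1 + l * x (j+1) ω + φ * x (j+1) ω ^ 2|G j]
            =ᵐ[P] fun ω => 1 + φ * σ (j+1) ω := by
          have hid : (fun ω => 1 + l * x (j+1) ω + φ * x (j+1) ω ^ 2)
              = (fun _ => (1:ℝ)) + (l • x (j+1) + φ • fun ω => x (j+1) ω ^ 2) := by
            funext ω
            simp only [Pi.add_apply, Pi.smul_apply, smul_eq_mul]
            ring
          rw [hid]
          have c1 := condExp_add (m := G j) (μ := P) (integrable_const (1:ℝ))
            (((hx_int (j+1) h1j hjn).smul l).add ((hx2_int (j+1) h1j hjn).smul φ))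
          have c2 := condExp_add (m := G j) (μ := P) ((hx_int (j+1) h1j hjn).smul l)
            ((hx2_int (j+1) h1j hjn).smul φ)
          have c3 := condExp_smul (m := G j) (m₀ := m) (μ := P) l (x (j+1))
          have c4 := condExp_smul (m := G j) (m₀ := m) (μ := P) φ (fun ω => x (j+1) ω ^ 2)
          have c5 : P[(fun _ => (1:ℝ))|G j] = fun _ => (1:ℝ) := condExp_const (G.le j) 1
          have c6 : P[x (j+1)|G j] =ᵐ[P] 0 := hmean (j+1) h1j hjn
          have c7 : P[(fun ω => x (j+1) ω ^ 2)|G j] = σ (j+1) := by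
            simp only [hσdef, Nat.add_sub_cancel]
          filter_upwards [c1, c2, c3, c4, c6] with ω h1 h2 h3 h4 h6
          rw [h1, Pi.add_apply, c5, h2, Pi.add_apply, h3, h4, Pi.smul_apply, Pi.smul_apply,
            h6, c7]
          simp
        have hcondg : P[g|G j] ≤ᵐ[P] fun ω => Real.exp (φ * σ (j+1) ω) := by
          have h1 := condExp_mono (μ := P) (m := G j) hg_int hh_int hgle
          filter_upwards [h1, hcondh] with ω hω1 hω2
          refine hω1.trans ?_
          rw [hω2]
          have := Real.add_one_le_exp (φ * σ (j+1) ω)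
          linarith
        -- combine
        have hmain : P[W (j+1)|G j] ≤ᵐ[P] W j := by
          rw [hFg]
          filter_upwards [hpull, hcondg] with ω h1 h2
          rw [h1, Pi.mul_apply]
          calc F ω * (P[g|G j]) ω ≤ F ω * Real.exp (φ * σ (j+1) ω) := by
                exact mul_le_mul_of_nonneg_left h2 (Real.exp_pos _).le
            _ = W j ω := by
                simp only [hFdef, hWdef, ← Real.exp_add]
                rw [hVsucc ω]
                ring_nf
        calc ∫ ω, W (j+1) ω ∂P = ∫ ω, (P[W (j+1)|G j]) ω ∂P :=
              (integral_condExp (G.le j)).symm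
          _ ≤ ∫ ω, W j ω ∂P :=
              integral_mono_ae integrable_condExp (hW_int j hjn') hmain

  -- integrability of exp(l * S n)
  have hESint : Integrable (fun ω => Real.exp (l * S n ω)) P := by
    refine Integrable.mono' (integrable_const (Real.exp (l * (n * M))))
      (((hS_meas n le_rfl).const_mul l).exp).aestronglyMeasurable ?_
    filter_upwards [hbdd_all] with ω hb
    rw [Real.norm_eq_abs, abs_of_pos (Real.exp_pos _), Real.exp_le_exp]
    have hSb : S n ω ≤ n * M := by
      calc S n ω ≤ ∑ i ∈ Finset.Icc 1 n, M := Finset.sum_le_sum fun i hi => (abs_le.1 (hb i hi)).2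
        _ ≤ n * M := by
            rw [Finset.sum_const, nsmul_eq_mul]
            have hcard : (Finset.Icc 1 n).card = n := by simp [Nat.card_Icc]
            rw [hcard]
    exact mul_le_mul_of_nonneg_left hSb hl0.le
  -- moment bound
  have hES : ∫ ω, Real.exp (l * S n ω) ∂P ≤ Real.exp (φ * v) := by
    have hae : ∀ᵐ ω ∂P, Real.exp (l * S n ω) ≤ Real.exp (φ * v) * W n ω := by
      filter_upwards [hvar] with ω hω
      have hVn : V n ω ≤ v := hω
      simp only [hWdef, ← Real.exp_add]
      rw [Real.exp_le_exp]
      nlinarith [hφ0]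
    calc ∫ ω, Real.exp (l * S n ω) ∂P
        ≤ ∫ ω, Real.exp (φ * v) * W n ω ∂P :=
          integral_mono_ae hESint ((hW_int n le_rfl).const_mul _) hae
      _ = Real.exp (φ * v) * ∫ ω, W n ω ∂P := integral_const_mul _ _
      _ ≤ Real.exp (φ * v) * 1 :=
          mul_le_mul_of_nonneg_left (hWint_le n le_rfl) (Real.exp_pos _).le
      _ = Real.exp (φ * v) := mul_one _
  -- Markov
  have markov := mul_meas_ge_le_integral_of_nonneg
    (Filter.Eventually.of_forall fun ω => (Real.exp_pos (l * S n ω)).le) hESint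
    (Real.exp (l * t))
  have hPA' : (P {ω | Real.exp (l * t) ≤ Real.exp (l * S n ω)}).toReal ≤ δ := by
    have h1 : (P {ω | Real.exp (l * t) ≤ Real.exp (l * S n ω)}).toReal
        ≤ Real.exp (φ * v) / Real.exp (l * t) := by
      rw [le_div_iff₀ (Real.exp_pos _), mul_comm]
      exact markov.trans hES
    refine h1.trans ?_
    rw [← Real.exp_sub]
    have hexp2 : φ * v - l * t ≤ Real.log δ := by
      have hlog : L = -Real.log δ := by rw [hLdef, one_div, Real.log_inv]
      nlinarith [hexp_le]
    calc Real.exp (φ * v - l * t) ≤ Real.exp (Real.log δ) := Real.exp_le_exp.2 hexp2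
      _ = δ := Real.exp_log hδ
  have hcompl : P {ω | t < S n ω} ≤ ENNReal.ofReal δ := by
    calc P {ω | t < S n ω}
        ≤ P {ω | Real.exp (l * t) ≤ Real.exp (l * S n ω)} := by
          refine measure_mono fun ω hω => ?_
          simp only [Set.mem_setOf_eq] at hω ⊢
          exact Real.exp_le_exp.2 (mul_le_mul_of_nonneg_left hω.le hl0.le)
      _ ≤ ENNReal.ofReal δ := by
          rw [← ENNReal.ofReal_toReal (measure_ne_top P _)]
          exact ENNReal.ofReal_le_ofReal hPA'
  -- conclude
  have hgoal : {ω | ∑ i ∈ Finset.Icc 1 n, x i ω ≤ t} = {ω | S n ω ≤ t} := rfl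
  rw [hgoal]
  have hAmeas : MeasurableSet {ω | S n ω ≤ t} :=
    measurableSet_le (hS_meas n le_rfl) measurable_const
  have hcomplset : {ω | S n ω ≤ t}ᶜ = {ω | t < S n ω} := by
    ext ω; simp [not_le]
  have hsum1 : P {ω | S n ω ≤ t} + P {ω | S n ω ≤ t}ᶜ = 1 := by
    rw [measure_add_measure_compl hAmeas, measure_univ]
  have hkey : ENNReal.ofReal (1 - δ) + P {ω | S n ω ≤ t}ᶜ
      ≤ P {ω | S n ω ≤ t} + P {ω | S n ω ≤ t}ᶜ := by
    rw [hsum1]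
    calc ENNReal.ofReal (1 - δ) + P {ω | S n ω ≤ t}ᶜ
        ≤ ENNReal.ofReal (1 - δ) + ENNReal.ofReal δ := by
          refine add_le_add_right ?_ _
          rw [hcomplset]
          exact hcompl
      _ = ENNReal.ofReal 1 := by
          rw [← ENNReal.ofReal_add (by linarith) hδ.le]
          norm_num
      _ = 1 := ENNReal.ofReal_one
  exact ENNReal.le_of_add_le_add_right (measure_ne_top P _) hkey
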